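/- For every fixed integer d ≥ 1 there exists a constant C (depending only on d) such that every string t of length n contains at most C·n d-short runs; that is, the number of pairs (i,j) such that t[i..j] is a d-short run of t is at most C·n. -/

import Mathlib

/-- `p` is a period of the substring `t[i..j]` of the 1-indexed string `t`:
`1 ≤ p ≤ |t[i..j]| = j - i + 1`, and `t[k] = t[k + p]` whenever both positions
lie in `[i..j]` (vacuously, the length is always a period). -/
def IsPeriodOf {α : Type*} (t : ℕ → α) (i j p : ℕ) : Prop :=
  1 ≤ p ∧ p ≤ j + 1 - i ∧ ∀ k, i ≤ k → k + p ≤ j → t (k + p) = t k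

/-- The minimal period of the substring `t[i..j]`. -/
noncomputable def minPeriod {α : Type*} (t : ℕ → α) (i j : ℕ) : ℕ :=
  sInf {p | IsPeriodOf t i j p}

/-- `t[i..j]` is a run of the string `t[1..n]`: its exponent is at least `2`
(i.e. `j - i + 1 ≥ 2 · minPeriod`), and the extensions `t[i-1..j]` (if `i > 1`)
and `t[i..j+1]` (if `j < n`) have strictly larger minimal periods. -/
def IsRun {α : Type*} (t : ℕ → α) (n i j : ℕ) : Prop :=
  1 ≤ i ∧ i ≤ j ∧ j ≤ n ∧
  2 * minPeriod t i j ≤ j + 1 - i ∧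
  (1 < i → minPeriod t i j < minPeriod t (i - 1) j) ∧
  (j < n → minPeriod t i j < minPeriod t i (j + 1))

/-- `t[i..j]` is a `d`-short run of `t[1..n]`: it can be written as `xyx` with
`x, y` nonempty, `|y| ≤ d`, `|x|` the minimal period of `t[i..j]` (so
`|x| + |y|` is a period of `t[i..j]` of length `2|x| + |y|`), and the
extensions `t[i-1..j]`, `t[i..j+1]` (when defined) have strictly larger
minimal periods. -/
def IsDShortRun {α : Type*} (t : ℕ → α) (n d i j : ℕ) : Prop :=
  1 ≤ i ∧ i ≤ j ∧ j ≤ n ∧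
  (∃ x y : ℕ, 0 < x ∧ 0 < y ∧ y ≤ d ∧ j + 1 - i = 2 * x + y ∧
    x = minPeriod t i j ∧ IsPeriodOf t i j (x + y)) ∧
  (1 < i → minPeriod t i j < minPeriod t (i - 1) j) ∧
  (j < n → minPeriod t i j < minPeriod t i (j + 1))

lemma minPeriod_isPeriod {α : Type*} (t : ℕ → α) (i j : ℕ) (hij : i ≤ j) :
    IsPeriodOf t i j (minPeriod t i j) := by
  have hne : {p | IsPeriodOf t i j p}.Nonempty := by
    refine ⟨j + 1 - i, by omega, le_rfl, fun k hk hkj => ?_⟩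
    omega
  exact Nat.sInf_mem hne

lemma shortRun_len_le {α : Type*} {t : ℕ → α} {n d i j : ℕ}
    (h : IsDShortRun t n d i j) : j + 1 - i ≤ 3 * d := by
  obtain ⟨hi, hij, hjn, ⟨x, y, hx, hy, hyd, hlen, hxmin, h1, h2, hper⟩, _, _⟩ := h
  have hpx := minPeriod_isPeriod t i j hij
  rw [← hxmin] at hpx
  obtain ⟨-, -, hperx⟩ := hpx
  -- claim A : t (k + y) = t k when k + x + y ≤ j
  have hA : ∀ k, i ≤ k → k + x + y ≤ j → t (k + y) = t k := by
    intro k hk hkj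
    have e1 : t (k + (x + y)) = t k := hper k hk (by omega)
    have e2 : t (k + y + x) = t (k + y) := hperx (k + y) (by omega) (by omega)
    have : k + y + x = k + (x + y) := by omega
    rw [this] at e2
    rw [← e2, e1]
  have hpy : IsPeriodOf t i j y := by
    refine ⟨hy, by omega, fun k hk hkj => ?_⟩
    by_cases hc : k + x + y ≤ j
    · exact hA k hk hc
    · have hm : i + x ≤ k := by omega
      set m := k - x with hmdef
      have hmk : m + x = k := by omega
      have e1 : t (m + y + x) = t (m + y) := hperx (m + y) (by omega) (by omega)
      have e2 : t (m + y) = t m := hA m (by omega) (by omega)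
      have e3 : t (m + x) = t m := hperx m (by omega) (by omega)
      have : k + y = m + y + x := by omega
      rw [this, e1, e2, ← e3, hmk]
  have : minPeriod t i j ≤ y := Nat.sInf_le hpy
  omega

/-- For every fixed `d ≥ 1` there is a constant `C` such that every string of
length `n` contains at most `C · n` `d`-short runs. -/
theorem number_of_short_runs_linear (d : ℕ) (hd : 1 ≤ d) :
    ∃ C : ℕ, ∀ (α : Type) [LinearOrder α] (n : ℕ) (t : ℕ → α),
      {ij : ℕ × ℕ | IsDShortRun t n d ij.1 ij.2}.ncard ≤ C * n := by
  refine ⟨3 * d, fun α _ n t => ?_⟩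
  set S := {ij : ℕ × ℕ | IsDShortRun t n d ij.1 ij.2} with hS
  set f : ℕ × ℕ → ℕ × ℕ := fun ij => (ij.1, ij.2 + 1 - ij.1) with hf
  have hmem : ∀ ij ∈ S, 1 ≤ ij.1 ∧ ij.1 ≤ ij.2 ∧ ij.2 ≤ n ∧ ij.2 + 1 - ij.1 ≤ 3 * d := by
    intro ij hij
    obtain ⟨h1, h2, h3, -⟩ := hij.out
    exact ⟨h1, h2, h3, shortRun_len_le hij⟩
  have hinj : Set.InjOn f S := by
    intro a ha b hb hab
    obtain ⟨ha1, ha2, -⟩ := hmem a ha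
    obtain ⟨hb1, hb2, -⟩ := hmem b hb
    simp only [hf, Prod.mk.injEq] at hab
    obtain ⟨e1, e2⟩ := hab
    exact Prod.ext e1 (by omega)
  have himg : f '' S ⊆ ↑(Finset.Icc 1 n ×ˢ Finset.Icc 1 (3 * d)) := by
    rintro p ⟨ij, hij, rfl⟩
    obtain ⟨h1, h2, h3, h4⟩ := hmem ij hij
    simp only [hf, Finset.coe_product, Set.mem_prod, Finset.mem_coe, Finset.mem_Icc]
    exact ⟨⟨h1, by omega⟩, by omega, h4⟩
  calc S.ncard = (f '' S).ncard := (Set.ncard_image_of_injOn hinj).symm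
    _ ≤ (Finset.Icc 1 n ×ˢ Finset.Icc 1 (3 * d) : Finset (ℕ × ℕ)).card := by
        rw [← Set.ncard_coe_finset]
        exact Set.ncard_le_ncard himg (Finset.finite_toSet _)
    _ = n * (3 * d) := by simp [Nat.card_Icc]
    _ ≤ 3 * d * n := by rw [Nat.mul_comm]
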